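/- Let X : [0,T] → ℝ^d, let P^n = {0 = t^n_0 < ... < t^n_{N_n} = T} be a partition, and let X^n be the piecewise constant approximation X^n_t = X_T·1_{{T}}(t) + Σ_k X_{t^n_k}·1_{[t^n_k, t^n_{k+1})}(t). Define Λ^n_{s,t} = ∫_s^t X^n_{s,u} ⊗ d(X^n − X)_u (a finite sum, since X^n is piecewise constant). Then sup_{(s,t)∈Δ_T} |Λ^n_{s,t}| ≤ 2‖X‖_∞ ‖X^n − X‖_∞. -/

import Mathlib

open scoped ENNReal Classical
open Filter MeasureTheory ProbabilityTheory

noncomputable section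

/-- The `p`-variation of a path `X` over `[0,T]`, as an extended nonnegative real:
`(sup over partitions of Σ ‖increment‖^p)^(1/p)`. -/
def epVar {E : Type*} [NormedAddCommGroup E] (X : ℝ → E) (p T : ℝ) : ℝ≥0∞ :=
  (⨆ (n : ℕ) (t : ℕ → ℝ) (_ : Monotone t) (_ : t 0 = 0) (_ : t n = T),
    ∑ i ∈ Finset.range n, ENNReal.ofReal (‖X (t (i + 1)) - X (t i)‖ ^ p)) ^ (1 / p)

/-- The `r`-variation of a two-parameter function `A` over `[0,T]`. -/
def epVar2 {E : Type*} [NormedAddCommGroup E] (A : ℝ → ℝ → E) (r T : ℝ) : ℝ≥0∞ :=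
  (⨆ (n : ℕ) (t : ℕ → ℝ) (_ : Monotone t) (_ : t 0 = 0) (_ : t n = T),
    ∑ i ∈ Finset.range n, ENNReal.ofReal (‖A (t i) (t (i + 1))‖ ^ r)) ^ (1 / r)

/-- Piecewise constant approximation of `X` along the partition `t 0 ≤ t 1 ≤ ... ≤ t N`. -/
def pcApprox {E : Type*} (X : ℝ → E) (N : ℕ) (t : ℕ → ℝ) (s : ℝ) : E :=
  X (t (Nat.findGreatest (fun k => t k ≤ s) N))

/-- Tensor (outer) product of two Euclidean vectors, with the Frobenius (Euclidean) norm. -/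
def tp2 {d e : ℕ} (v : EuclideanSpace ℝ (Fin d)) (w : EuclideanSpace ℝ (Fin e)) :
    EuclideanSpace ℝ (Fin d × Fin e) :=
  (WithLp.equiv 2 (Fin d × Fin e → ℝ)).symm (fun q => v q.1 * w q.2)

def tp {d : ℕ} (v w : EuclideanSpace ℝ (Fin d)) : EuclideanSpace ℝ (Fin d × Fin d) :=
  tp2 v w

/-- Clamping of `x` into the interval `[s,u]`. -/
def clamp (s u x : ℝ) : ℝ := max s (min x u)

/-- The second-level lift `𝕏ⁿ_{s,u} = ∫_s^u (Xⁿ_r − Xⁿ_s) ⊗ dXⁿ_r` of a path `Xn` which is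
piecewise constant along the partition `t`, written as a left-point Riemann-Stieltjes sum. -/
def pcLift {d : ℕ} (N : ℕ) (Xn : ℝ → EuclideanSpace ℝ (Fin d)) (t : ℕ → ℝ) (s u : ℝ) :
    EuclideanSpace ℝ (Fin d × Fin d) :=
  ∑ i ∈ Finset.range N,
    tp (Xn (clamp s u (t i)) - Xn s) (Xn (clamp s u (t (i + 1))) - Xn (clamp s u (t i)))

/-- The left-point Riemann sum `∫_0^u Xⁿ_r ⊗ dX_r = Σ_k X_{t_k} ⊗ (X_{t_{k+1}∧u} − X_{t_k∧u})`. -/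
def riemannSum {d : ℕ} (N : ℕ) (X : ℝ → EuclideanSpace ℝ (Fin d)) (t : ℕ → ℝ) (u : ℝ) :
    EuclideanSpace ℝ (Fin d × Fin d) :=
  ∑ k ∈ Finset.range N, tp (X (t k)) (X (min (t (k + 1)) u) - X (min (t k) u))

/-- The left-point Riemann sum `∫_s^u Xⁿ_{s,r} ⊗ dX_r`. -/
def mixedInt {d : ℕ} (N : ℕ) (X : ℝ → EuclideanSpace ℝ (Fin d)) (t : ℕ → ℝ) (s u : ℝ) :
    EuclideanSpace ℝ (Fin d × Fin d) :=
  ∑ i ∈ Finset.range N,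
    tp (pcApprox X N t (clamp s u (t i)) - pcApprox X N t s)
      (X (clamp s u (t (i + 1))) - X (clamp s u (t i)))

/-- A control function on the simplex `Δ_T`: nonnegative and superadditive. -/
def IsControl (T : ℝ) (w : ℝ → ℝ → ℝ) : Prop :=
  (∀ s t, 0 ≤ s → s ≤ t → t ≤ T → 0 ≤ w s t) ∧
  (∀ s u t, 0 ≤ s → s ≤ u → u ≤ t → t ≤ T → w s u + w u t ≤ w s t)

/-- Property (RIE) for a path `X` relative to `p ∈ (2,3)` and a sequence of partitions
`t n 0 ≤ ... ≤ t n (N n)` of `[0,T]` with vanishing mesh. -/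
structure PropertyRIE {d : ℕ} (p T : ℝ) (X : ℝ → EuclideanSpace ℝ (Fin d))
    (N : ℕ → ℕ) (t : ℕ → ℕ → ℝ) : Prop where
  mono : ∀ n, Monotone (t n)
  zero : ∀ n, t n 0 = 0
  top : ∀ n, t n (N n) = T
  mesh : ∀ ε > 0, ∃ m, ∀ n ≥ m, ∀ i < N n, t n (i + 1) - t n i < ε
  unif : TendstoUniformlyOn (fun n s => pcApprox X (N n) (t n) s) X atTop (Set.Icc 0 T)
  riemann : ∃ I : ℝ → EuclideanSpace ℝ (Fin d × Fin d),
    TendstoUniformlyOn (fun n u => riemannSum (N n) X (t n) u) I atTop (Set.Icc 0 T)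
  control : ∃ w : ℝ → ℝ → ℝ, IsControl T w ∧
    (∀ s u, 0 ≤ s → s ≤ u → u ≤ T → ‖X u - X s‖ ^ p ≤ w s u) ∧
    (∀ n, ∀ k ℓ : ℕ, k < ℓ → ℓ ≤ N n →
      ‖riemannSum (N n) X (t n) (t n ℓ) - riemannSum (N n) X (t n) (t n k) -
          tp (X (t n k)) (X (t n ℓ) - X (t n k))‖ ^ (p / 2) ≤ w (t n k) (t n ℓ))

lemma norm_tp {d : ℕ} (v w : EuclideanSpace ℝ (Fin d)) : ‖tp v w‖ = ‖v‖ * ‖w‖ := by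
  simp only [tp, tp2, EuclideanSpace.norm_eq]
  rw [← Real.sqrt_mul (by positivity)]
  congr 1
  simp only [WithLp.equiv_symm_apply, PiLp.toLp_apply]
  rw [Fintype.sum_prod_type, Finset.sum_mul_sum]
  simp [mul_pow]

lemma pcApprox_partition {E : Type*} (X : ℝ → E) (N : ℕ) (t : ℕ → ℝ) (hmono : Monotone t)
    {j : ℕ} (hj : j ≤ N) : pcApprox X N t (t j) = X (t j) := by
  unfold pcApprox
  have h1 : j ≤ Nat.findGreatest (fun k => t k ≤ t j) N := Nat.le_findGreatest hj le_rfl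
  have h2 : t (Nat.findGreatest (fun k => t k ≤ t j) N) ≤ t j :=
    Nat.findGreatest_spec (P := fun k => t k ≤ t j) hj le_rfl
  have : t (Nat.findGreatest (fun k => t k ≤ t j) N) = t j := le_antisymm h2 (hmono h1)
  rw [this]

/-- the error term `Λⁿ_{s,t} = ∫_s^t Xⁿ_{s,u} ⊗ d(Xⁿ − X)_u` satisfies the
uniform bound `sup_{(s,t) ∈ Δ_T} |Λⁿ_{s,t}| ≤ 2 ‖X‖_∞ ‖Xⁿ − X‖_∞`. -/
theorem lambda_sup_bound (d : ℕ) (T : ℝ) (hT : 0 ≤ T)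
    (X : ℝ → EuclideanSpace ℝ (Fin d)) (N : ℕ) (t : ℕ → ℝ)
    (hmono : Monotone t) (h0 : t 0 = 0) (hN : t N = T)
    (MX MD : ℝ)
    (hMX : ∀ u ∈ Set.Icc (0 : ℝ) T, ‖X u‖ ≤ MX)
    (hMD : ∀ u ∈ Set.Icc (0 : ℝ) T, ‖pcApprox X N t u - X u‖ ≤ MD) :
    ∀ s u : ℝ, 0 ≤ s → s ≤ u → u ≤ T →
      ‖∑ i ∈ Finset.range N,
          tp (pcApprox X N t (clamp s u (t i)) - pcApprox X N t s)
            ((pcApprox X N t (clamp s u (t (i + 1))) - X (clamp s u (t (i + 1)))) -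
              (pcApprox X N t (clamp s u (t i)) - X (clamp s u (t i))))‖ ≤
        2 * MX * MD := by
  intro s u hs hsu huT
  have hMX0 : 0 ≤ MX := le_trans (norm_nonneg _) (hMX 0 ⟨le_refl 0, hT⟩)
  have hMD0 : 0 ≤ MD := le_trans (norm_nonneg _) (hMD 0 ⟨le_refl 0, hT⟩)
  have hpc : ∀ x : ℝ, ‖pcApprox X N t x‖ ≤ MX := by
    intro x
    unfold pcApprox
    apply hMX
    exact ⟨by rw [← h0]; exact hmono (Nat.zero_le _),
      by rw [← hN]; exact hmono (Nat.findGreatest_le N)⟩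
  set f : ℕ → EuclideanSpace ℝ (Fin d × Fin d) := fun i =>
    tp (pcApprox X N t (clamp s u (t i)) - pcApprox X N t s)
      ((pcApprox X N t (clamp s u (t (i + 1))) - X (clamp s u (t (i + 1)))) -
        (pcApprox X N t (clamp s u (t i)) - X (clamp s u (t i)))) with hf
  have hclamp_lo : ∀ x : ℝ, x ≤ s → clamp s u x = s := by
    intro x hx
    exact max_eq_left (le_trans (min_le_left _ _) hx)
  have hclamp_hi : ∀ x : ℝ, u ≤ x → clamp s u x = u := by
    intro x hx
    rw [clamp, min_eq_right hx]
    exact max_eq_right hsu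
  have hclamp_mid : ∀ x : ℝ, s ≤ x → x ≤ u → clamp s u x = x := by
    intro x h1 h2
    rw [clamp, min_eq_left h2]
    exact max_eq_right h1
  have key : ∀ i ∈ Finset.range N,
      ‖f i‖ ≤ if s < t i ∧ t i < u ∧ u < t (i + 1) then 2 * MX * MD else 0 := by
    intro i hi
    rw [Finset.mem_range] at hi
    rcases le_or_gt (t i) s with h1 | h1
    · -- clamp s u (t i) = s, first factor vanishes
      have hc : clamp s u (t i) = s := hclamp_lo _ h1
      have hz : ‖f i‖ = 0 := by
        rw [hf]; simp only [hc, sub_self]; rw [norm_tp]; simp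
      rw [hz]
      split_ifs <;> positivity
    rcases le_or_gt u (t i) with h2 | h2
    · -- both clamps equal u, second factor vanishes
      have hc1 : clamp s u (t i) = u := hclamp_hi _ h2
      have hc2 : clamp s u (t (i + 1)) = u :=
        hclamp_hi _ (le_trans h2 (hmono (Nat.le_succ i)))
      have hz : ‖f i‖ = 0 := by
        rw [hf]; simp only [hc1, hc2, sub_self]; rw [norm_tp]; simp
      rw [hz]
      split_ifs <;> positivity
    -- now s < t i and t i < u
    have hc1 : clamp s u (t i) = t i := hclamp_mid _ h1.le h2.le
    have hpceq : ∀ j : ℕ, j ≤ N → pcApprox X N t (t j) = X (t j) :=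
      fun j hj => pcApprox_partition X N t hmono hj
    rcases le_or_gt (t (i + 1)) u with h3 | h3
    · -- interior term: second factor vanishes since pcApprox = X at partition points
      have hc2 : clamp s u (t (i + 1)) = t (i + 1) :=
        hclamp_mid _ (le_trans h1.le (hmono (Nat.le_succ i))) h3
      have hz : ‖f i‖ = 0 := by
        rw [hf]; simp only [hc1, hc2, hpceq i hi.le, hpceq (i + 1) hi, sub_self]
        rw [norm_tp]; simp
      rw [hz]
      split_ifs <;> positivity
    · -- boundary term: s < t i < u < t (i+1)
      have hcond : s < t i ∧ t i < u ∧ u < t (i + 1) := ⟨h1, h2, h3⟩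
      rw [if_pos hcond]
      have hc2 : clamp s u (t (i + 1)) = u := hclamp_hi _ h3.le
      rw [hf]
      simp only [hc1, hc2, hpceq i hi.le, sub_self, sub_zero]
      rw [norm_tp]
      have ha : ‖X (t i) - pcApprox X N t s‖ ≤ 2 * MX := by
        calc ‖X (t i) - pcApprox X N t s‖
            ≤ ‖X (t i)‖ + ‖pcApprox X N t s‖ := norm_sub_le _ _
          _ ≤ MX + MX := add_le_add
              (hMX _ ⟨hs.trans h1.le, h2.le.trans huT⟩) (hpc _)
          _ = 2 * MX := by ring
      have hb : ‖pcApprox X N t u - X u‖ ≤ MD :=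
        hMD u ⟨le_trans hs hsu, huT⟩
      calc ‖X (t i) - pcApprox X N t s‖ * ‖pcApprox X N t u - X u‖
          ≤ (2 * MX) * MD :=
            mul_le_mul ha hb (norm_nonneg _) (by positivity)
        _ = 2 * MX * MD := by ring
  calc ‖∑ i ∈ Finset.range N, f i‖
      ≤ ∑ i ∈ Finset.range N, ‖f i‖ := norm_sum_le _ _
    _ ≤ ∑ i ∈ Finset.range N,
          (if s < t i ∧ t i < u ∧ u < t (i + 1) then 2 * MX * MD else 0) :=
        Finset.sum_le_sum key
    _ ≤ 2 * MX * MD := by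
        classical
        rw [Finset.sum_ite, Finset.sum_const_zero, add_zero, Finset.sum_const, nsmul_eq_mul]
        have hcard : ((Finset.range N).filter
            (fun i => s < t i ∧ t i < u ∧ u < t (i + 1))).card ≤ 1 := by
          rw [Finset.card_le_one]
          intro a ha b hb
          simp only [Finset.mem_filter, Finset.mem_range] at ha hb
          by_contra hne
          rcases Nat.lt_or_ge a b with hab | hab
          · have : t (a + 1) ≤ t b := hmono hab
            linarith [ha.2.2.2, hb.2.2.1]
          · have hba : b < a := lt_of_le_of_ne hab (Ne.symm hne)
            have : t (b + 1) ≤ t a := hmono hba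
            linarith [hb.2.2.2, ha.2.2.1]
        calc (((Finset.range N).filter
              (fun i => s < t i ∧ t i < u ∧ u < t (i + 1))).card : ℝ) * (2 * MX * MD)
            ≤ 1 * (2 * MX * MD) := by
              apply mul_le_mul_of_nonneg_right _ (by positivity)
              exact_mod_cast hcard
          _ = 2 * MX * MD := one_mul _
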